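/- (Deterministic convergence theorem combining the arguments of Theorems 3 and 4.) Let f : E → ℝ be differentiable, bounded below, L-smooth (L > 0), and with ‖∇f(x)‖ ≤ l for all x. Let θ_t, d_t, d'_t be sequences in E with θ_{t+1} = θ_t − η_t d'_t, suppose ⟨∇f(θ_t), d_t⟩ ≥ ‖d_t‖² for all t, and set Δ_t = ‖d_t − d'_t‖. If 0 < η_t ≤ 1/(2L), Σ_{t=0}^∞ η_t = ∞, Σ_{t=0}^∞ η_t Δ_t < ∞, and Σ_{t=0}^∞ η_t² Δ_t² < ∞, then liminf_{t→∞} ‖d_t‖ = 0. -/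

import Mathlib

open RealInnerProductSpace Filter Finset

lemma descent_aux {E : Type*} [NormedAddCommGroup E] [InnerProductSpace ℝ E] [CompleteSpace E]
    (f : E → ℝ) (grad : E → E) (hgrad : ∀ x, HasGradientAt f (grad x) x)
    (L : ℝ) (hsmooth : ∀ x y, ‖grad x - grad y‖ ≤ L * ‖x - y‖)
    (x v : E) : f (x + v) ≤ f x + ⟪grad x, v⟫ + L / 2 * ‖v‖ ^ 2 := by
  set h : ℝ → ℝ := fun s => f x + s * ⟪grad x, v⟫ + L / 2 * s ^ 2 * ‖v‖ ^ 2 - f (x + s • v) with hh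
  have hφ : ∀ s : ℝ, HasDerivAt (fun s : ℝ => x + s • v) v s := fun s => by
    simpa using ((hasDerivAt_id s).smul_const v).const_add x
  have hg : ∀ s : ℝ, HasDerivAt (fun s => f (x + s • v)) ⟪grad (x + s • v), v⟫ s := by
    intro s
    have := ((hgrad (x + s • v)).hasFDerivAt).comp_hasDerivAt s (hφ s)
    simp at this
    exact this
  have hDh : ∀ s : ℝ, HasDerivAt h (⟪grad x, v⟫ + L * s * ‖v‖ ^ 2 - ⟪grad (x + s • v), v⟫) s := by
    intro s
    have h1 : HasDerivAt (fun s : ℝ => f x + s * ⟪grad x, v⟫ + L / 2 * s ^ 2 * ‖v‖ ^ 2)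
        (⟪grad x, v⟫ + L * s * ‖v‖ ^ 2) s := by
      have ha : HasDerivAt (fun s : ℝ => s * ⟪grad x, v⟫) ⟪grad x, v⟫ s := by
        simpa using (hasDerivAt_id s).mul_const ⟪grad x, v⟫
      have hb : HasDerivAt (fun s : ℝ => L / 2 * s ^ 2 * ‖v‖ ^ 2) (L * s * ‖v‖ ^ 2) s := by
        have := ((hasDerivAt_pow 2 s).const_mul (L / 2)).mul_const (‖v‖ ^ 2)
        exact this.congr_deriv (by push_cast; ring)
      exact (ha.const_add (f x)).add hb
    exact h1.sub (hg s)
  have hmono : MonotoneOn h (Set.Icc (0 : ℝ) 1) := by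
    apply monotoneOn_of_deriv_nonneg (convex_Icc 0 1)
    · exact fun s _ => (hDh s).continuousAt.continuousWithinAt
    · exact fun s _ => ((hDh s).differentiableAt).differentiableWithinAt
    · intro s hs
      rw [interior_Icc] at hs
      rw [(hDh s).deriv]
      have key : ⟪grad (x + s • v), v⟫ - ⟪grad x, v⟫ ≤ L * s * ‖v‖ ^ 2 := by
        have h1 : ⟪grad (x + s • v) - grad x, v⟫ ≤ ‖grad (x + s • v) - grad x‖ * ‖v‖ :=
          real_inner_le_norm _ _
        have h2 : ‖grad (x + s • v) - grad x‖ ≤ L * (s * ‖v‖) := by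
          have := hsmooth (x + s • v) x
          simpa [norm_smul, abs_of_pos hs.1] using this
        calc ⟪grad (x + s • v), v⟫ - ⟪grad x, v⟫ = ⟪grad (x + s • v) - grad x, v⟫ := by
              rw [inner_sub_left]
          _ ≤ ‖grad (x + s • v) - grad x‖ * ‖v‖ := h1
          _ ≤ L * (s * ‖v‖) * ‖v‖ := by
              apply mul_le_mul_of_nonneg_right h2 (norm_nonneg _)
          _ = L * s * ‖v‖ ^ 2 := by ring
      linarith
  have h01 := hmono (Set.left_mem_Icc.2 zero_le_one) (Set.right_mem_Icc.2 zero_le_one) zero_le_one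
  simp only [hh] at h01
  simp only [zero_smul, add_zero, one_smul, zero_mul, one_mul, one_pow] at h01
  linarith

/-- Deterministic convergence theorem combining the arguments of Theorems 3
and 4: for `f` differentiable, bounded below, `L`-smooth, with `‖∇f‖ ≤ l`,
updates `θ (t+1) = θ t - η t • d' t` with `⟪∇f (θ t), d t⟫ ≥ ‖d t‖²`,
`0 < η t ≤ 1/(2L)`, divergent `∑ η t`, and summable `η t * Δ t` and
`η t² * Δ t²` where `Δ t = ‖d t - d' t‖`, one has `liminf ‖d t‖ = 0`. -/
theorem adafed_convergence_theorem {E : Type*} [NormedAddCommGroup E]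
    [InnerProductSpace ℝ E] [CompleteSpace E]
    (f : E → ℝ) (grad : E → E) (hgrad : ∀ x, HasGradientAt f (grad x) x)
    (hbdd : BddBelow (Set.range f))
    (L : ℝ) (hL : 0 < L)
    (hsmooth : ∀ x y, ‖grad x - grad y‖ ≤ L * ‖x - y‖)
    (l : ℝ) (hl : ∀ x, ‖grad x‖ ≤ l)
    (θ d d' : ℕ → E) (η : ℕ → ℝ)
    (hupd : ∀ t, θ (t + 1) = θ t - η t • d' t)
    (hinner : ∀ t, ‖d t‖ ^ 2 ≤ ⟪grad (θ t), d t⟫)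
    (hη0 : ∀ t, 0 < η t) (hη1 : ∀ t, η t ≤ 1 / (2 * L))
    (hdiv : Tendsto (fun n => ∑ t ∈ Finset.range n, η t) atTop atTop)
    (hsum1 : Summable fun t => η t * ‖d t - d' t‖)
    (hsum2 : Summable fun t => η t ^ 2 * ‖d t - d' t‖ ^ 2) :
    Filter.liminf (fun t => ‖d t‖) atTop = 0 := by

  set Δ : ℕ → ℝ := fun t => ‖d t - d' t‖ with hΔ
  set b : ℕ → ℝ := fun t => l * (η t * Δ t) + L * (η t ^ 2 * Δ t ^ 2) with hb
  set S : ℕ → ℝ := fun t => η t / 2 * ‖d t‖ ^ 2 with hS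
  have hl0 : 0 ≤ l := le_trans (norm_nonneg _) (hl 0)
  -- per-step descent inequality
  have step : ∀ t, S t ≤ f (θ t) - f (θ (t + 1)) + b t := by
    intro t
    have hd := descent_aux f grad hgrad L hsmooth (θ t) (-(η t • d' t))
    have hupd' : θ (t + 1) = θ t + -(η t • d' t) := by rw [hupd t]; abel
    rw [← hupd'] at hd
    have hi1 : ⟪grad (θ t), -(η t • d' t)⟫ = -(η t * ⟪grad (θ t), d' t⟫) := by
      rw [inner_neg_right, real_inner_smul_right]
    have hi2 : ⟪grad (θ t), d' t⟫ = ⟪grad (θ t), d t⟫ - ⟪grad (θ t), d t - d' t⟫ := by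
      rw [inner_sub_right]; ring
    have hi3 : ⟪grad (θ t), d t - d' t⟫ ≤ l * Δ t := by
      calc ⟪grad (θ t), d t - d' t⟫ ≤ ‖grad (θ t)‖ * ‖d t - d' t‖ := real_inner_le_norm _ _
        _ ≤ l * Δ t := mul_le_mul_of_nonneg_right (hl _) (norm_nonneg _)
    have hn1 : ‖-(η t • d' t)‖ ^ 2 = η t ^ 2 * ‖d' t‖ ^ 2 := by
      rw [norm_neg, norm_smul, mul_pow, Real.norm_eq_abs, sq_abs]
    have hn2 : ‖d' t‖ ≤ ‖d t‖ + Δ t := by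
      have : d' t = d t - (d t - d' t) := by abel
      rw [this]; exact norm_sub_le _ _
    have hn3 : ‖d' t‖ ^ 2 ≤ 2 * ‖d t‖ ^ 2 + 2 * Δ t ^ 2 := by
      nlinarith [norm_nonneg (d' t), norm_nonneg (d t), norm_nonneg (d t - d' t),
        sq_nonneg (‖d t‖ - Δ t)]
    have hLη : L * η t ^ 2 ≤ η t / 2 := by
      have h2 : 0 < η t := hη0 t
      have h3 : η t * (2 * L) ≤ 1 := (le_div_iff₀ (by positivity)).1 (hη1 t)
      nlinarith
    have hinn := hinner t
    have hη := (hη0 t).le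
    simp only [hS, hb, hΔ]
    rw [hi1, hi2] at hd
    have key : f (θ (t+1)) ≤ f (θ t) - η t * ‖d t‖ ^ 2 + η t * (l * Δ t)
        + L / 2 * (η t ^ 2 * (2 * ‖d t‖ ^ 2 + 2 * Δ t ^ 2)) := by
      have e1 : η t * ⟪grad (θ t), d t⟫ ≥ η t * ‖d t‖ ^ 2 :=
        mul_le_mul_of_nonneg_left hinn hη
      have e2 : η t * ⟪grad (θ t), d t - d' t⟫ ≤ η t * (l * Δ t) :=
        mul_le_mul_of_nonneg_left hi3 hη
      have e3 : L / 2 * ‖-(η t • d' t)‖ ^ 2 ≤ L / 2 * (η t ^ 2 * (2 * ‖d t‖ ^ 2 + 2 * Δ t ^ 2)) := by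
        rw [hn1]
        have : η t ^ 2 * ‖d' t‖ ^ 2 ≤ η t ^ 2 * (2 * ‖d t‖ ^ 2 + 2 * Δ t ^ 2) :=
          mul_le_mul_of_nonneg_left hn3 (sq_nonneg _)
        exact mul_le_mul_of_nonneg_left this (by positivity)
      nlinarith [hd]
    nlinarith [key, sq_nonneg (Δ t), mul_le_mul_of_nonneg_right hLη (sq_nonneg (‖d t‖))]
  have hS0 : ∀ t, 0 ≤ S t := fun t =>
    mul_nonneg (by linarith [hη0 t]) (sq_nonneg _)
  -- summability of S
  have hbsum : Summable b := (hsum1.mul_left l).add (hsum2.mul_left L)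
  have hb0 : ∀ t, 0 ≤ b t := fun t =>
    add_nonneg (mul_nonneg hl0 (mul_nonneg (hη0 t).le (norm_nonneg _)))
      (mul_nonneg hL.le (mul_nonneg (sq_nonneg _) (sq_nonneg _)))
  obtain ⟨m, hm⟩ := hbdd
  have hSsum : Summable S := by
    apply summable_of_sum_range_le hS0
    intro n
    calc ∑ t ∈ range n, S t ≤ ∑ t ∈ range n, (f (θ t) - f (θ (t + 1)) + b t) :=
          Finset.sum_le_sum fun t _ => step t
      _ = (f (θ 0) - f (θ n)) + ∑ t ∈ range n, b t := by
          rw [Finset.sum_add_distrib, Finset.sum_range_sub' (fun t => f (θ t))]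
      _ ≤ (f (θ 0) - m) + ∑' t, b t := by
          gcongr
          · exact hm (Set.mem_range_self _)
          · exact Summable.sum_le_tsum _ (fun t _ => hb0 t) hbsum
  -- frequently small
  have key : ∀ ε : ℝ, 0 < ε → ∃ᶠ t in atTop, ‖d t‖ ≤ ε := by
    intro ε hε
    by_contra hcon
    rw [not_frequently] at hcon
    simp only [not_le] at hcon
    obtain ⟨N, hN⟩ := eventually_atTop.1 hcon
    have hS' : Summable fun t => S (t + N) := (summable_nat_add_iff N).2 hSsum
    have hcmp : Summable fun t => ε ^ 2 / 2 * η (t + N) := by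
      apply hS'.of_nonneg_of_le (fun t => mul_nonneg (by positivity) (hη0 _).le)
      intro t
      have h1 : ε ≤ ‖d (t + N)‖ := (hN (t + N) (Nat.le_add_left N t)).le
      have h2 : ε ^ 2 ≤ ‖d (t + N)‖ ^ 2 := by nlinarith
      simp only [hS]
      nlinarith [(hη0 (t + N)).le]
    have hηsum : Summable fun t => η (t + N) := by
      have hne : ε ^ 2 / 2 ≠ 0 := by positivity
      exact (summable_mul_left_iff hne).1 hcmp
    have : Summable η := (summable_nat_add_iff N).1 hηsum
    exact not_tendsto_nhds_of_tendsto_atTop hdiv _ this.hasSum.tendsto_sum_nat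
  have hbd : IsBoundedUnder (· ≥ ·) atTop fun t => ‖d t‖ :=
    isBoundedUnder_of ⟨0, fun t => norm_nonneg _⟩
  refine le_antisymm ?_ ?_
  · apply le_of_forall_pos_le_add
    intro ε hε
    have := liminf_le_of_frequently_le (key ε hε) hbd
    linarith
  · exact le_liminf_of_le (IsCoboundedUnder.of_frequently_le (key 1 one_pos))
      (Eventually.of_forall fun t => norm_nonneg _)
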